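/- Let p be a natural number and define the sequence of real polynomials a_k by a_0(x) = x^p and a_{k+1}(x) = a_k''(x) + (d/dx)(x·a_k(x)). Let 0 < α < 1, let κ, x be real numbers, and define c(x,t) = ∑_{k=0}^∞ a_k(x) · κ^k · t^{k(1−α)} / Γ(k(1−α)+1). Then for every t > 0, the time derivative of c exists and can be computed term by term: (∂/∂t) c(x,t) = ∑_{k=1}^∞ a_k(x) · κ^k · t^{k(1−α)−1} / Γ(k(1−α)). -/

import Mathlib

open Real Polynomial

private lemma my_one_le_gamma {y : ℝ} (hy : 2 ≤ y) : 1 ≤ Real.Gamma y := by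
  rcases eq_or_lt_of_le hy with h | h
  · rw [← h, Real.Gamma_two]
  · have h2 := Real.Gamma_strictMonoOn_Ici (Set.mem_Ici.mpr le_rfl)
      (Set.mem_Ici.mpr hy) h
    rw [Real.Gamma_two] at h2
    exact h2.le

private lemma my_factorial_le_gamma : ∀ (m : ℕ) {y : ℝ}, (m : ℝ) + 1 ≤ y →
    (m.factorial : ℝ) ≤ 2 * Real.Gamma y := by
  intro m
  induction m with
  | zero =>
    intro y hy
    simp only [Nat.factorial_zero, Nat.cast_one]
    norm_num at hy
    by_cases h2 : 2 ≤ y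
    · have h1 := my_one_le_gamma h2
      linarith
    · push_neg at h2
      have hy0 : (0:ℝ) < y := by linarith
      have h3 : 1 ≤ Real.Gamma (y + 1) := my_one_le_gamma (by linarith)
      rw [Real.Gamma_add_one hy0.ne'] at h3
      nlinarith [Real.Gamma_pos_of_pos hy0]
  | succ m ih =>
    intro y hy
    have hm0 : (0:ℝ) ≤ (m:ℝ) := Nat.cast_nonneg m
    have hy1 : (m : ℝ) + 1 ≤ y - 1 := by push_cast at hy ⊢; linarith
    have hy0 : (0:ℝ) < y - 1 := by linarith
    have hG : Real.Gamma y = (y - 1) * Real.Gamma (y - 1) := by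
      have h := Real.Gamma_add_one hy0.ne'
      rw [sub_add_cancel] at h
      exact h
    have ihy := ih hy1
    have hGpos := Real.Gamma_pos_of_pos hy0
    have hf0 : (0:ℝ) ≤ (m.factorial : ℝ) := Nat.cast_nonneg _
    rw [Nat.factorial_succ, hG]
    push_cast
    nlinarith

private lemma my_rpow_le_gamma {A y : ℝ} (hA : 1 ≤ A) (hy : 0 ≤ y) :
    A ^ y ≤ 2 * A * Real.exp A * Real.Gamma (y + 1) := by
  have hA0 : (0:ℝ) < A := lt_of_lt_of_le one_pos hA
  set n := ⌊y⌋₊ with hn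
  have h1 : A ^ y ≤ A ^ (((n : ℝ)) + 1) :=
    Real.rpow_le_rpow_of_exponent_le hA (by exact_mod_cast (Nat.lt_floor_add_one y).le)
  have h2 : A ^ (((n : ℝ)) + 1) = A ^ (n + 1) := by
    rw [← Real.rpow_natCast A (n + 1)]
    push_cast
    ring_nf
  have h3 : A ^ n ≤ (n.factorial : ℝ) * Real.exp A := by
    have hs := Real.sum_le_exp_of_nonneg hA0.le (n + 1)
    have hterm : A ^ n / (n.factorial : ℝ) ≤ Real.exp A := by
      refine le_trans ?_ hs
      exact Finset.single_le_sum (f := fun i => A ^ i / (i.factorial : ℝ))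
        (fun i _ => by positivity) (Finset.self_mem_range_succ n)
    rw [div_le_iff₀ (by positivity)] at hterm
    linarith [mul_comm (Real.exp A) ((n.factorial : ℝ))]
  have h4 : (n.factorial : ℝ) ≤ 2 * Real.Gamma (y + 1) :=
    my_factorial_le_gamma n (by linarith [Nat.floor_le hy])
  have hexp : 0 < Real.exp A := Real.exp_pos A
  calc A ^ y ≤ A ^ (n + 1) := by rw [← h2]; exact h1
    _ = A * A ^ n := by ring
    _ ≤ A * ((n.factorial : ℝ) * Real.exp A) := mul_le_mul_of_nonneg_left h3 hA0.le
    _ ≤ A * (2 * Real.Gamma (y + 1) * Real.exp A) :=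
        mul_le_mul_of_nonneg_left (mul_le_mul_of_nonneg_right h4 hexp.le) hA0.le
    _ = 2 * A * Real.exp A * Real.Gamma (y + 1) := by ring

set_option maxHeartbeats 1000000 in
/-- Term-by-term time differentiation of the VIM series solution: with
`a_0(x) = x^p`, `a_{k+1} = a_k'' + (x·a_k)'`, `0 < α < 1`, for every `t > 0` the
function `t ↦ ∑_k a_k(x) κ^k t^{k(1−α)} / Γ(k(1−α)+1)` has derivative
`∑_{k=1}^∞ a_k(x) κ^k t^{k(1−α)−1} / Γ(k(1−α))` at `t`. -/
theorem vim_series_time_derivative (p : ℕ) (a : ℕ → Polynomial ℝ)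
    (ha0 : a 0 = Polynomial.X ^ p)
    (harec : ∀ k, a (k + 1) =
      Polynomial.derivative (Polynomial.derivative (a k)) +
        Polynomial.derivative (Polynomial.X * a k))
    (α κ x : ℝ) (hα0 : 0 < α) (hα1 : α < 1) (t : ℝ) (ht : 0 < t) :
    HasDerivAt
      (fun s : ℝ => ∑' k : ℕ,
        (a k).eval x * κ ^ k * s ^ ((k : ℝ) * (1 - α)) /
          Real.Gamma ((k : ℝ) * (1 - α) + 1))
      (∑' k : ℕ,
        (a (k + 1)).eval x * κ ^ (k + 1) * t ^ (((k : ℝ) + 1) * (1 - α) - 1) /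
          Real.Gamma (((k : ℝ) + 1) * (1 - α))) t := by
  set β : ℝ := 1 - α with hβdef
  have hβ0 : 0 < β := by rw [hβdef]; linarith
  have hβ1 : β ≤ 1 := by rw [hβdef]; linarith
  have hp0 : (0:ℝ) ≤ p := Nat.cast_nonneg p
  -- coefficient bounds
  set E : ℝ := ((p : ℝ) + 2) ^ 2 with hEdef
  have hE1 : (1:ℝ) ≤ E := by rw [hEdef]; nlinarith
  have hE0 : (0:ℝ) < E := lt_of_lt_of_le one_pos hE1
  have hEk : ∀ k : ℕ, (0:ℝ) ≤ E ^ k := fun k => pow_nonneg hE0.le k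
  have hcoeff : ∀ k, (∀ i, |(a k).coeff i| ≤ E ^ k) ∧ ∀ i, p < i → (a k).coeff i = 0 := by
    intro k
    induction k with
    | zero =>
      constructor
      · intro i
        rw [ha0, Polynomial.coeff_X_pow]
        split <;> simp
      · intro i hi
        rw [ha0, Polynomial.coeff_X_pow, if_neg (by omega)]
    | succ k ih =>
      obtain ⟨ihb, ihz⟩ := ih
      have hc : ∀ i, (a (k + 1)).coeff i =
          (a k).coeff (i + 2) * (((i:ℝ) + 2) * ((i:ℝ) + 1))
            + (a k).coeff i * ((i:ℝ) + 1) := by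
        intro i
        rw [harec k, Polynomial.coeff_add, Polynomial.coeff_derivative,
          Polynomial.coeff_derivative, Polynomial.coeff_derivative,
          Polynomial.coeff_X_mul]
        push_cast
        ring
      refine ⟨fun i => ?_, fun i hi => ?_⟩
      · rw [hc i]
        have h1 : |(a k).coeff (i + 2) * (((i:ℝ) + 2) * ((i:ℝ) + 1))|
            ≤ E ^ k * (((p:ℝ) + 2) * ((p:ℝ) + 1)) := by
          by_cases h : p < i + 2
          · rw [ihz _ h, zero_mul, abs_zero]
            have : (0:ℝ) ≤ ((p:ℝ) + 2) * ((p:ℝ) + 1) := by positivity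
            exact mul_nonneg (hEk k) this
          · push_neg at h
            have hip : (i:ℝ) + 2 ≤ (p:ℝ) := by exact_mod_cast h
            rw [abs_mul, abs_of_nonneg (show (0:ℝ) ≤ ((i:ℝ) + 2) * ((i:ℝ) + 1) by positivity)]
            have hb := ihb (i + 2)
            have hi0 : (0:ℝ) ≤ (i:ℝ) := Nat.cast_nonneg i
            have hfac : ((i:ℝ) + 2) * ((i:ℝ) + 1) ≤ ((p:ℝ) + 2) * ((p:ℝ) + 1) := by nlinarith
            exact mul_le_mul hb hfac (by positivity) (hEk k)
        have h2 : |(a k).coeff i * ((i:ℝ) + 1)| ≤ E ^ k * ((p:ℝ) + 1) := by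
          by_cases h : p < i
          · rw [ihz _ h, zero_mul, abs_zero]
            have : (0:ℝ) ≤ (p:ℝ) + 1 := by positivity
            exact mul_nonneg (hEk k) this
          · push_neg at h
            have hip : (i:ℝ) ≤ (p:ℝ) := by exact_mod_cast h
            rw [abs_mul, abs_of_nonneg (show (0:ℝ) ≤ (i:ℝ) + 1 by positivity)]
            have hi1 : (i:ℝ) + 1 ≤ (p:ℝ) + 1 := by
              have : (i:ℝ) ≤ (p:ℝ) := by exact_mod_cast h
              linarith
            exact mul_le_mul (ihb i) hi1 (by positivity) (hEk k)
        refine le_trans (abs_add_le _ _) ?_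
        have hpow : E ^ (k + 1) = E ^ k * E := pow_succ E k
        rw [hpow, hEdef]
        nlinarith [hEk k]
      · rw [hc i, ihz i hi, ihz (i + 2) (by omega), zero_mul, zero_mul, add_zero]
  have hdeg : ∀ k, (a k).natDegree ≤ p := fun k =>
    Polynomial.natDegree_le_iff_coeff_eq_zero.mpr fun N hN => (hcoeff k).2 N hN
  set D : ℝ := ∑ i ∈ Finset.range (p + 1), |x| ^ i with hDdef
  have hD0 : 0 ≤ D := by
    rw [hDdef]; exact Finset.sum_nonneg fun i _ => by positivity
  have heval : ∀ k, |(a k).eval x| ≤ D * E ^ k := by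
    intro k
    rw [Polynomial.eval_eq_sum_range' (Nat.lt_succ_of_le (hdeg k))]
    refine le_trans (Finset.abs_sum_le_sum_abs _ _) ?_
    calc ∑ i ∈ Finset.range (p + 1), |(a k).coeff i * x ^ i|
        ≤ ∑ i ∈ Finset.range (p + 1), E ^ k * |x| ^ i := by
          refine Finset.sum_le_sum fun i _ => ?_
          rw [abs_mul, abs_pow]
          exact mul_le_mul_of_nonneg_right ((hcoeff k).1 i) (by positivity)
      _ = D * E ^ k := by rw [← Finset.mul_sum, hDdef, mul_comm]
  -- constants
  set R : ℝ := t + 1 with hRdef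
  have hR1 : (1:ℝ) ≤ R := by rw [hRdef]; linarith
  have hR0 : (0:ℝ) < R := lt_of_lt_of_le one_pos hR1
  set Q : ℝ := E * |κ| * R ^ β with hQdef
  have hRβ : (0:ℝ) < R ^ β := Real.rpow_pos_of_pos hR0 β
  have hQ0 : 0 ≤ Q := by
    rw [hQdef]
    exact mul_nonneg (mul_nonneg hE0.le (abs_nonneg κ)) hRβ.le
  set A : ℝ := (Q + 1) ^ β⁻¹ with hAdef
  have hA1 : (1:ℝ) ≤ A := by
    rw [hAdef]
    exact Real.one_le_rpow (by linarith) (by positivity)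
  have hA0 : (0:ℝ) < A := lt_of_lt_of_le one_pos hA1
  have hAβ : A ^ β = Q + 1 := by
    rw [hAdef, ← Real.rpow_mul (by linarith : (0:ℝ) ≤ Q + 1),
      inv_mul_cancel₀ hβ0.ne', Real.rpow_one]
  have hGpos : ∀ k : ℕ, 0 < Real.Gamma ((k:ℝ) * β + 1) := fun k =>
    Real.Gamma_pos_of_pos (by positivity)
  have hG : ∀ k : ℕ, (Q + 1) ^ k ≤ 2 * A * Real.exp A * Real.Gamma ((k:ℝ) * β + 1) := by
    intro k
    have h := my_rpow_le_gamma hA1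
      (show (0:ℝ) ≤ (k:ℝ) * β from mul_nonneg (Nat.cast_nonneg k) hβ0.le)
    rwa [show A ^ ((k:ℝ) * β) = (Q + 1) ^ k by
      rw [mul_comm, Real.rpow_mul hA0.le, hAβ, Real.rpow_natCast]] at h
  set r : ℝ := Q / (Q + 1) with hrdef
  have hr0 : 0 ≤ r := by
    rw [hrdef]; exact div_nonneg hQ0 (by linarith)
  have hr1 : r < 1 := by
    rw [hrdef]; exact (div_lt_one (by linarith)).mpr (by linarith)
  have hrk : ∀ k : ℕ, (0:ℝ) ≤ r ^ k := fun k => pow_nonneg hr0 k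
  have hAe : (0:ℝ) < 2 * A * Real.exp A := by positivity
  set M : ℝ := D * (2 / t + 1) * (2 * A * Real.exp A) with hMdef
  set u : ℕ → ℝ := fun k => M * ((k:ℝ) + 1) * r ^ k with hudef
  have hu : Summable u := by
    have h1 : Summable fun k : ℕ => (k:ℝ) ^ 1 * r ^ k :=
      summable_pow_mul_geometric_of_norm_lt_one 1
        (by rwa [Real.norm_eq_abs, abs_of_nonneg hr0])
    have h2 : Summable fun k : ℕ => r ^ k := summable_geometric_of_lt_one hr0 hr1
    refine ((h1.add h2).mul_left M).congr fun k => ?_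
    simp only [hudef]
    ring
  have hQG : ∀ k : ℕ, Q ^ k / Real.Gamma ((k:ℝ) * β + 1) ≤ 2 * A * Real.exp A * r ^ k := by
    intro k
    rw [div_le_iff₀ (hGpos k), hrdef, div_pow]
    have hQ1k : (0:ℝ) < (Q + 1) ^ k := by positivity
    have hone : 1 ≤ 2 * A * Real.exp A * Real.Gamma ((k:ℝ) * β + 1) / (Q + 1) ^ k :=
      (one_le_div hQ1k).mpr (hG k)
    calc Q ^ k = Q ^ k * 1 := (mul_one _).symm
      _ ≤ Q ^ k * (2 * A * Real.exp A * Real.Gamma ((k:ℝ) * β + 1) / (Q + 1) ^ k) :=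
          mul_le_mul_of_nonneg_left hone (pow_nonneg hQ0 k)
      _ = 2 * A * Real.exp A * (Q ^ k / (Q + 1) ^ k) * Real.Gamma ((k:ℝ) * β + 1) := by
          ring
  have hS : t ∈ Set.Ioo (t / 2) R := ⟨by linarith, by rw [hRdef]; linarith⟩
  have hmem_pos : ∀ y ∈ Set.Ioo (t / 2) R, (0:ℝ) < y := fun y hy =>
    lt_trans (by linarith) hy.1
  have hRk : ∀ k : ℕ, R ^ ((k:ℝ) * β) = (R ^ β) ^ k := by
    intro k
    rw [mul_comm, Real.rpow_mul hR0.le, Real.rpow_natCast]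
  have habs : ∀ k : ℕ, (0:ℝ) ≤ |κ| ^ k := fun k => pow_nonneg (abs_nonneg κ) k
  -- the bound on the derivative terms
  have hbound : ∀ (k : ℕ) (y : ℝ), y ∈ Set.Ioo (t / 2) R →
      ‖(a k).eval x * κ ^ k * (((k:ℝ) * β) * y ^ ((k:ℝ) * β - 1)) /
        Real.Gamma ((k:ℝ) * β + 1)‖ ≤ u k := by
    intro k y hy
    have hy0 : 0 < y := hmem_pos y hy
    have hΓ := hGpos k
    have hkβ : (0:ℝ) ≤ (k:ℝ) * β := mul_nonneg (Nat.cast_nonneg k) hβ0.le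
    have hyp : (0:ℝ) ≤ y ^ ((k:ℝ) * β - 1) := (Real.rpow_pos_of_pos hy0 _).le
    rw [Real.norm_eq_abs, abs_div, abs_of_pos hΓ, abs_mul, abs_mul, abs_pow,
      abs_of_nonneg (mul_nonneg hkβ hyp)]
    have hyc : y ^ ((k:ℝ) * β - 1) ≤ R ^ ((k:ℝ) * β) * (2 / t) := by
      rw [Real.rpow_sub_one hy0.ne']
      have h1 : y ^ ((k:ℝ) * β) ≤ R ^ ((k:ℝ) * β) :=
        Real.rpow_le_rpow hy0.le hy.2.le hkβ
      have h2 : 1 / y ≤ 2 / t := by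
        rw [div_le_div_iff₀ hy0 ht]
        linarith [hy.1]
      calc y ^ ((k:ℝ) * β) / y = y ^ ((k:ℝ) * β) * (1 / y) := by ring
        _ ≤ R ^ ((k:ℝ) * β) * (2 / t) :=
            mul_le_mul h1 h2 (by positivity) (Real.rpow_pos_of_pos hR0 _).le
    have hkk : (k:ℝ) * β ≤ (k:ℝ) + 1 := by
      nlinarith [Nat.cast_nonneg (α := ℝ) k]
    have hnum : |(a k).eval x| * |κ| ^ k * (((k:ℝ) * β) * y ^ ((k:ℝ) * β - 1))
        ≤ (D * E ^ k) * |κ| ^ k * (((k:ℝ) + 1) * (R ^ ((k:ℝ) * β) * (2 / t))) := by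
      refine mul_le_mul ?_ ?_ (mul_nonneg hkβ hyp) ?_
      · exact mul_le_mul_of_nonneg_right (heval k) (habs k)
      · exact mul_le_mul hkk hyc hyp (by positivity)
      · exact mul_nonneg (mul_nonneg hD0 (hEk k)) (habs k)
    calc |(a k).eval x| * |κ| ^ k * (((k:ℝ) * β) * y ^ ((k:ℝ) * β - 1)) /
          Real.Gamma ((k:ℝ) * β + 1)
        ≤ (D * E ^ k) * |κ| ^ k * (((k:ℝ) + 1) * (R ^ ((k:ℝ) * β) * (2 / t))) /
          Real.Gamma ((k:ℝ) * β + 1) := by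
          exact (div_le_div_iff_of_pos_right hΓ).mpr hnum
      _ = (D * (2 / t) * ((k:ℝ) + 1)) * (Q ^ k / Real.Gamma ((k:ℝ) * β + 1)) := by
          rw [hRk k, hQdef, mul_pow, mul_pow]
          ring
      _ ≤ (D * (2 / t) * ((k:ℝ) + 1)) * (2 * A * Real.exp A * r ^ k) := by
          refine mul_le_mul_of_nonneg_left (hQG k) ?_
          have h2t : (0:ℝ) ≤ 2 / t := by positivity
          exact mul_nonneg (mul_nonneg hD0 h2t) (by positivity)
      _ ≤ u k := by
          simp only [hudef, hMdef]
          have hC : (0:ℝ) ≤ D * ((k:ℝ) + 1) * (2 * A * Real.exp A) * r ^ k := by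
            have : (0:ℝ) ≤ (k:ℝ) + 1 := by positivity
            exact mul_nonneg (mul_nonneg (mul_nonneg hD0 this) hAe.le) (hrk k)
          nlinarith [hC]
  -- summability at the point t
  have hg0 : Summable (fun k : ℕ => (a k).eval x * κ ^ k * t ^ ((k:ℝ) * β) /
      Real.Gamma ((k:ℝ) * β + 1)) := by
    refine Summable.of_norm_bounded hu fun k => ?_
    have hΓ := hGpos k
    have hkβ : (0:ℝ) ≤ (k:ℝ) * β := mul_nonneg (Nat.cast_nonneg k) hβ0.le
    rw [Real.norm_eq_abs, abs_div, abs_of_pos hΓ, abs_mul, abs_mul, abs_pow,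
      abs_of_nonneg (Real.rpow_nonneg ht.le _)]
    have htRk : t ^ ((k:ℝ) * β) ≤ R ^ ((k:ℝ) * β) :=
      Real.rpow_le_rpow ht.le (by rw [hRdef]; linarith) hkβ
    have hnum : |(a k).eval x| * |κ| ^ k * t ^ ((k:ℝ) * β)
        ≤ (D * E ^ k) * |κ| ^ k * R ^ ((k:ℝ) * β) := by
      refine mul_le_mul ?_ htRk (Real.rpow_nonneg ht.le _) ?_
      · exact mul_le_mul_of_nonneg_right (heval k) (habs k)
      · exact mul_nonneg (mul_nonneg hD0 (hEk k)) (habs k)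
    calc |(a k).eval x| * |κ| ^ k * t ^ ((k:ℝ) * β) / Real.Gamma ((k:ℝ) * β + 1)
        ≤ (D * E ^ k) * |κ| ^ k * R ^ ((k:ℝ) * β) / Real.Gamma ((k:ℝ) * β + 1) :=
          (div_le_div_iff_of_pos_right hΓ).mpr hnum
      _ = D * (Q ^ k / Real.Gamma ((k:ℝ) * β + 1)) := by
          rw [hRk k, hQdef, mul_pow, mul_pow]
          ring
      _ ≤ D * (2 * A * Real.exp A * r ^ k) := mul_le_mul_of_nonneg_left (hQG k) hD0
      _ ≤ u k := by
          simp only [hudef, hMdef]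
          have hk1 : (1:ℝ) ≤ (k:ℝ) + 1 := by
            have := Nat.cast_nonneg (α := ℝ) k
            linarith
          have h2t : (1:ℝ) ≤ 2 / t + 1 := by
            have : (0:ℝ) < 2 / t := by positivity
            linarith
          have hC : (0:ℝ) ≤ D * (2 * A * Real.exp A) * r ^ k :=
            mul_nonneg (mul_nonneg hD0 hAe.le) (hrk k)
          have hprod : (1:ℝ) ≤ (2 / t + 1) * ((k:ℝ) + 1) := by nlinarith
          nlinarith [mul_le_mul_of_nonneg_left hprod hC]
  -- term-by-term derivatives
  have hderiv : ∀ (k : ℕ) (y : ℝ), y ∈ Set.Ioo (t / 2) R →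
      HasDerivAt (fun s : ℝ => (a k).eval x * κ ^ k * s ^ ((k:ℝ) * β) /
          Real.Gamma ((k:ℝ) * β + 1))
        ((a k).eval x * κ ^ k * (((k:ℝ) * β) * y ^ ((k:ℝ) * β - 1)) /
          Real.Gamma ((k:ℝ) * β + 1)) y := by
    intro k y hy
    have hy0 : 0 < y := hmem_pos y hy
    have h1 := (Real.hasDerivAt_rpow_const (x := y) (p := (k:ℝ) * β)
      (Or.inl hy0.ne')).const_mul ((a k).eval x * κ ^ k / Real.Gamma ((k:ℝ) * β + 1))
    have heq : (fun s : ℝ => (a k).eval x * κ ^ k * s ^ ((k:ℝ) * β) /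
        Real.Gamma ((k:ℝ) * β + 1)) = fun s : ℝ =>
        ((a k).eval x * κ ^ k / Real.Gamma ((k:ℝ) * β + 1)) * s ^ ((k:ℝ) * β) := by
      funext s
      ring
    rw [heq, show (a k).eval x * κ ^ k * (((k:ℝ) * β) * y ^ ((k:ℝ) * β - 1)) /
        Real.Gamma ((k:ℝ) * β + 1) = ((a k).eval x * κ ^ k / Real.Gamma ((k:ℝ) * β + 1)) *
        (((k:ℝ) * β) * y ^ ((k:ℝ) * β - 1)) from by ring]
    exact h1
  have H := hasDerivAt_tsum_of_isPreconnected hu isOpen_Ioo isPreconnected_Ioo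
    hderiv hbound hS hg0 hS
  have hsum' : Summable fun k : ℕ =>
      (a k).eval x * κ ^ k * (((k:ℝ) * β) * t ^ ((k:ℝ) * β - 1)) /
        Real.Gamma ((k:ℝ) * β + 1) :=
    Summable.of_norm_bounded hu fun k => hbound k t hS
  have hval : (∑' k : ℕ, (a k).eval x * κ ^ k * (((k:ℝ) * β) * t ^ ((k:ℝ) * β - 1)) /
      Real.Gamma ((k:ℝ) * β + 1)) =
      ∑' k : ℕ, (a (k + 1)).eval x * κ ^ (k + 1) * t ^ (((k:ℝ) + 1) * β - 1) /
        Real.Gamma (((k:ℝ) + 1) * β) := by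
    rw [Summable.tsum_eq_zero_add hsum']
    simp only [Nat.cast_zero, zero_mul, mul_zero, zero_div, zero_add]
    refine tsum_congr fun k => ?_
    have hz : (0:ℝ) < ((k:ℝ) + 1) * β := by positivity
    have hΓz : 0 < Real.Gamma (((k:ℝ) + 1) * β) := Real.Gamma_pos_of_pos hz
    push_cast
    rw [Real.Gamma_add_one hz.ne']
    field_simp
  rw [hval] at H
  exact H
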